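/- Let V' be a set of εn/log n nodes and for each v ∈ V' let f_v be a probability density function over a set V of n nodes with f_v(w) ≤ 1/log^4 n for all w. If for every w ∈ V the sum over v ∈ V' of f_v(w) is at most log^2 n, then the set R = {w ∈ V : Σ_{v∈V'} f_v(w) > ε/(2 log n)} has size strictly greater than n^{7/8}. -/

import Mathlib

open Finset Real

/-- for sufficiently large `n`, if `V'` has `εn/log n` nodes and each `f_v`
(`v ∈ V'`) is a PDF on a set `V` of `n` nodes with `f_v(w) ≤ 1/log^4 n`, and every column sum
`Σ_{v∈V'} f_v(w)` is at most `log² n`, then the set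
`R = {w : Σ_{v∈V'} f_v(w) > ε/(2 log n)}` has size `> n^{7/8}`. -/
theorem stmt2 (ε : ℝ) (hε : 0 < ε) :
    ∃ N : ℕ, ∀ n : ℕ, N ≤ n →
    ∀ (V : Type) [Fintype V] [DecidableEq V], Fintype.card V = n →
    ∀ (V' : Finset V) (f : V → V → ℝ),
      (V'.card : ℝ) = ε * n / Real.log n →
      (∀ v ∈ V', ∀ w, 0 ≤ f v w) →
      (∀ v ∈ V', ∑ w, f v w = 1) →
      (∀ v ∈ V', ∀ w, f v w ≤ 1 / (Real.log n) ^ 4) →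
      (∀ w, ∑ v ∈ V', f v w ≤ (Real.log n) ^ 2) →
      (n : ℝ) ^ ((7 : ℝ) / 8) <
        ((Finset.univ.filter fun w => ε / (2 * Real.log n) < ∑ v ∈ V', f v w).card : ℝ) := by
  -- asymptotic fact: 2 (log n)^3 < ε n^{1/8} eventually
  have hlo : (fun x : ℝ => Real.log x ^ (3 : ℝ)) =o[Filter.atTop]
      fun x : ℝ => x ^ ((1 : ℝ) / 8) :=
    isLittleO_log_rpow_rpow_atTop 3 (by norm_num)
  have hev : ∀ᶠ x : ℝ in Filter.atTop, 2 * Real.log x ^ 3 < ε * x ^ ((1 : ℝ) / 8) := by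
    filter_upwards [hlo.def (show (0:ℝ) < ε / 4 by positivity),
      Filter.eventually_ge_atTop (1 : ℝ)] with x hx hx1
    have hx0 : (0 : ℝ) < x := lt_of_lt_of_le one_pos hx1
    have hlog0 : 0 ≤ Real.log x := Real.log_nonneg hx1
    have hrp : 0 < x ^ ((1 : ℝ) / 8) := Real.rpow_pos_of_pos hx0 _
    rw [Real.norm_eq_abs, Real.norm_eq_abs, abs_of_nonneg (Real.rpow_nonneg hlog0 _),
      abs_of_nonneg hrp.le, show Real.log x ^ (3:ℝ) = Real.log x ^ (3:ℕ) by
        rw [← Real.rpow_natCast (Real.log x) 3]; norm_num] at hx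
    nlinarith
  have hev' : ∀ᶠ n : ℕ in Filter.atTop,
      2 * Real.log n ^ 3 < ε * (n : ℝ) ^ ((1 : ℝ) / 8) :=
    tendsto_natCast_atTop_atTop.eventually hev
  obtain ⟨N₀, hN₀⟩ := Filter.eventually_atTop.1 hev'
  refine ⟨max N₀ 2, fun n hn V _ _ hcard V' f hV' hf0 hf1 _ hcol => ?_⟩
  have hn2 : 2 ≤ n := le_trans (le_max_right _ _) hn
  have hkey := hN₀ n (le_trans (le_max_left _ _) hn)
  have hnpos : (0 : ℝ) < n := by positivity
  have hL : 0 < Real.log n := Real.log_pos (by exact_mod_cast hn2)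
  set L := Real.log n with hLdef
  set R := Finset.univ.filter fun w => ε / (2 * L) < ∑ v ∈ V', f v w with hRdef
  by_contra hcon
  push_neg at hcon
  -- total sum
  have htot : ∑ w, ∑ v ∈ V', f v w = ε * n / L := by
    rw [Finset.sum_comm]
    rw [Finset.sum_congr rfl fun v hv => hf1 v hv]
    simp [hV']
  -- bound on R
  have hRsum : ∑ w ∈ R, ∑ v ∈ V', f v w ≤ (R.card : ℝ) * L ^ 2 := by
    calc ∑ w ∈ R, ∑ v ∈ V', f v w ≤ ∑ _w ∈ R, L ^ 2 :=
          Finset.sum_le_sum fun w _ => hcol w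
      _ = (R.card : ℝ) * L ^ 2 := by rw [Finset.sum_const, nsmul_eq_mul]
  -- bound off R
  have hRc : ∑ w ∈ Rᶜ, ∑ v ∈ V', f v w ≤ (n : ℝ) * (ε / (2 * L)) := by
    calc ∑ w ∈ Rᶜ, ∑ v ∈ V', f v w ≤ ∑ _w ∈ Rᶜ, (ε / (2 * L)) := by
          refine Finset.sum_le_sum fun w hw => ?_
          have : ¬ (ε / (2 * L) < ∑ v ∈ V', f v w) := by
            intro h
            exact (Finset.mem_compl.1 hw) (Finset.mem_filter.2 ⟨Finset.mem_univ _, h⟩)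
          linarith [not_lt.1 this]
      _ = (Rᶜ.card : ℝ) * (ε / (2 * L)) := by rw [Finset.sum_const, nsmul_eq_mul]
      _ ≤ (n : ℝ) * (ε / (2 * L)) := by
          have : (Rᶜ.card : ℝ) ≤ n := by
            have h := Finset.card_le_univ (Rᶜ)
            rw [hcard] at h
            exact_mod_cast h
          have hpos : 0 ≤ ε / (2 * L) := by positivity
          exact mul_le_mul_of_nonneg_right this hpos
  have hsplit : ∑ w, ∑ v ∈ V', f v w = ∑ w ∈ R, ∑ v ∈ V', f v w
      + ∑ w ∈ Rᶜ, ∑ v ∈ V', f v w := (Finset.sum_add_sum_compl R _).symm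
  have hineq : ε * n / L ≤ (n : ℝ) ^ ((7:ℝ)/8) * L ^ 2 + (n : ℝ) * (ε / (2 * L)) := by
    have hRL : (R.card : ℝ) * L ^ 2 ≤ (n : ℝ) ^ ((7:ℝ)/8) * L ^ 2 :=
      mul_le_mul_of_nonneg_right hcon (by positivity)
    rw [hsplit] at htot
    linarith
  -- derive contradiction
  have hsplitn : (n : ℝ) = (n : ℝ) ^ ((7:ℝ)/8) * (n : ℝ) ^ ((1:ℝ)/8) := by
    rw [← Real.rpow_add hnpos]
    norm_num
  have h78 : (0:ℝ) < (n : ℝ) ^ ((7:ℝ)/8) := Real.rpow_pos_of_pos hnpos _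
  -- ε n / (2L) ≤ n^{7/8} L²
  have h1 : ε * n / (2 * L) ≤ (n : ℝ) ^ ((7:ℝ)/8) * L ^ 2 := by
    have : ε * n / L - (n:ℝ) * (ε / (2 * L)) = ε * n / (2 * L) := by
      field_simp; ring
    linarith [hineq, this]
  have h2 : ε * (n : ℝ) ≤ 2 * L * ((n : ℝ) ^ ((7:ℝ)/8) * L ^ 2) := by
    have h2L : (0:ℝ) < 2 * L := by linarith
    calc ε * (n:ℝ) = (ε * n / (2 * L)) * (2 * L) := by field_simp
      _ ≤ ((n : ℝ) ^ ((7:ℝ)/8) * L ^ 2) * (2 * L) := by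
          exact mul_le_mul_of_nonneg_right h1 h2L.le
      _ = 2 * L * ((n : ℝ) ^ ((7:ℝ)/8) * L ^ 2) := by ring
  have h3 : ε * (n : ℝ) ^ ((1:ℝ)/8) ≤ 2 * L ^ 3 := by
    have := h2
    rw [hsplitn] at this
    have := (mul_le_mul_iff_of_pos_right h78).1 (by nlinarith : ε * (n:ℝ)^((1:ℝ)/8) * (n:ℝ)^((7:ℝ)/8) ≤ 2 * L ^ 3 * (n:ℝ)^((7:ℝ)/8))
    linarith
  linarith
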